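/- Let (Ω, 𝔉, P) be a probability space, α ∈ [0,1], and β : Ω → ℝ a Bernoulli random variable with parameter α. Let x, x₋ : Ω → ℝⁿ and v, v₋ : Ω → ℝᵐ be integrable random vectors with E[v] = 0 and E[v₋] = 0, and suppose β is independent of the tuple (x, x₋, v, v₋). Let C, C₋ be m×n matrices, K an n×m matrix, and x̂_pred, x̂_prev ∈ ℝⁿ fixed vectors with E[x] = x̂_pred and E[x₋] = x̂_prev. Define y := (1−β)(C x + v) + β(C₋ x₋ + v₋) and the posterior estimate x̂_post := x̂_pred + K(y − (1−α)C x̂_pred − α C₋ x̂_prev). Then the posterior estimation error is unbiased: E[x − x̂_post] = 0. -/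

import Mathlib

open MeasureTheory Matrix ProbabilityTheory

/-- Unbiasedness of the posterior estimate of the risk-sensitive
filter with randomly one-step-delayed measurements. -/
theorem posterior_estimate_unbiased (n m : ℕ)
    {Ω : Type*} [MeasurableSpace Ω] (P : Measure Ω) [IsProbabilityMeasure P]
    (α : ℝ) (hα0 : 0 ≤ α) (hα1 : α ≤ 1)
    (β : Ω → ℝ) (hβmeas : Measurable β)
    (hβ01 : ∀ ω, β ω = 0 ∨ β ω = 1)
    (hβα : P {ω | β ω = 1} = ENNReal.ofReal α)
    (x xm : Ω → (Fin n → ℝ)) (v vm : Ω → (Fin m → ℝ))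
    (hxmeas : Measurable x) (hxmmeas : Measurable xm)
    (hvmeas : Measurable v) (hvmmeas : Measurable vm)
    (hx : Integrable x P) (hxm : Integrable xm P)
    (hv : Integrable v P) (hvm : Integrable vm P)
    (hvzero : (∫ ω, v ω ∂P) = 0) (hvmzero : (∫ ω, vm ω ∂P) = 0)
    (hindep : IndepFun β (fun ω => (x ω, xm ω, v ω, vm ω)) P)
    (C Cm : Matrix (Fin m) (Fin n) ℝ) (K : Matrix (Fin n) (Fin m) ℝ)
    (xhatPred xhatPrev : Fin n → ℝ)
    (hxmean : (∫ ω, x ω ∂P) = xhatPred) (hxmmean : (∫ ω, xm ω ∂P) = xhatPrev)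
    (y : Ω → (Fin m → ℝ))
    (hy : y = fun ω => (1 - β ω) • (C.mulVec (x ω) + v ω)
                      + β ω • (Cm.mulVec (xm ω) + vm ω))
    (xhatPost : Ω → (Fin n → ℝ))
    (hxhatPost : xhatPost = fun ω => xhatPred +
        K.mulVec (y ω - (1 - α) • C.mulVec xhatPred - α • Cm.mulVec xhatPrev)) :
    (∫ ω, (x ω - xhatPost ω) ∂P) = 0 := by
  -- basic facts about β
  have hβbd : ∀ ω, ‖β ω‖ ≤ 1 := by
    intro ω; rcases hβ01 ω with h | h <;> simp [h]
  have hβtop : MemLp β ⊤ P :=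
    memLp_top_of_bound hβmeas.aestronglyMeasurable 1 (Filter.Eventually.of_forall hβbd)
  have hβint : Integrable β P := hβtop.integrable le_top
  have hβavg : ∫ ω, β ω ∂P = α := by
    have hs : MeasurableSet {ω | β ω = 1} := hβmeas (measurableSet_singleton 1)
    have h1 : ∫ ω, β ω ∂P
        = ∫ ω, Set.indicator {ω | β ω = 1} (fun _ => (1 : ℝ)) ω ∂P := by
      refine integral_congr_ae (Filter.Eventually.of_forall fun ω => ?_)
      rcases hβ01 ω with h | h <;> simp [Set.indicator_apply, h]
    rw [h1, integral_indicator_const _ hs, measureReal_def, hβα, smul_eq_mul, mul_one,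
      ENNReal.toReal_ofReal hα0]
  -- key: E[β f] = α E[f] for f independent of β
  have key : ∀ f : Ω → ℝ, AEStronglyMeasurable f P → IndepFun β f P →
      ∫ ω, β ω * f ω ∂P = α * ∫ ω, f ω ∂P := by
    intro f hf hind
    rw [hind.integral_fun_mul_eq_mul_integral hβmeas.aestronglyMeasurable hf, hβavg]
  -- the two signals
  set A : Ω → (Fin m → ℝ) := fun ω => C.mulVec (x ω) + v ω with hA_def
  set B : Ω → (Fin m → ℝ) := fun ω => Cm.mulVec (xm ω) + vm ω with hB_def
  have hCx : Integrable (fun ω => C.mulVec (x ω)) P := by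
    simpa [Function.comp] using
      (LinearMap.toContinuousLinearMap (Matrix.mulVecLin C)).integrable_comp hx
  have hCmxm : Integrable (fun ω => Cm.mulVec (xm ω)) P := by
    simpa [Function.comp] using
      (LinearMap.toContinuousLinearMap (Matrix.mulVecLin Cm)).integrable_comp hxm
  have hA : Integrable A P := hCx.add hv
  have hB : Integrable B P := hCmxm.add hvm
  have hIA : (∫ ω, A ω ∂P) = C.mulVec xhatPred := by
    rw [hA_def, integral_add hCx hv, hvzero, add_zero]
    have := (LinearMap.toContinuousLinearMap (Matrix.mulVecLin C)).integral_comp_comm hx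
    simpa [Function.comp, hxmean] using this
  have hIB : (∫ ω, B ω ∂P) = Cm.mulVec xhatPrev := by
    rw [hB_def, integral_add hCmxm hvm, hvmzero, add_zero]
    have := (LinearMap.toContinuousLinearMap (Matrix.mulVecLin Cm)).integral_comp_comm hxm
    simpa [Function.comp, hxmmean] using this
  -- component integrability and integrals
  have hAj : ∀ j, Integrable (fun ω => A ω j) P := fun j => by
    simpa [Function.comp] using
      (ContinuousLinearMap.proj (R := ℝ) (φ := fun _ : Fin m => ℝ) j).integrable_comp hA
  have hBj : ∀ j, Integrable (fun ω => B ω j) P := fun j => by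
    simpa [Function.comp] using
      (ContinuousLinearMap.proj (R := ℝ) (φ := fun _ : Fin m => ℝ) j).integrable_comp hB
  have hIAj : ∀ j, ∫ ω, A ω j ∂P = C.mulVec xhatPred j := fun j => by
    have h := (ContinuousLinearMap.proj (R := ℝ) (φ := fun _ : Fin m => ℝ) j).integral_comp_comm hA
    rw [hIA] at h
    simpa only [ContinuousLinearMap.proj_apply] using h
  have hIBj : ∀ j, ∫ ω, B ω j ∂P = Cm.mulVec xhatPrev j := fun j => by
    have h := (ContinuousLinearMap.proj (R := ℝ) (φ := fun _ : Fin m => ℝ) j).integral_comp_comm hB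
    rw [hIB] at h
    simpa only [ContinuousLinearMap.proj_apply] using h
  -- independence with components
  have hindA : ∀ j, IndepFun β (fun ω => A ω j) P := by
    intro j
    have hφ : Measurable (fun p : (Fin n → ℝ) × (Fin n → ℝ) × (Fin m → ℝ) × (Fin m → ℝ) =>
        C.mulVec p.1 j + p.2.2.1 j) := by
      simp only [Matrix.mulVec, dotProduct]
      fun_prop
    exact hindep.comp measurable_id hφ
  have hindB : ∀ j, IndepFun β (fun ω => B ω j) P := by
    intro j
    have hφ : Measurable (fun p : (Fin n → ℝ) × (Fin n → ℝ) × (Fin m → ℝ) × (Fin m → ℝ) =>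
        Cm.mulVec p.2.1 j + p.2.2.2 j) := by
      simp only [Matrix.mulVec, dotProduct]
      fun_prop
    exact hindep.comp measurable_id hφ
  -- integrability of y
  have h1βtop : MemLp (fun ω => 1 - β ω) ⊤ P := (memLp_top_const 1).sub hβtop
  have hy1 : Integrable (fun ω => (1 - β ω) • A ω) P :=
    Integrable.smul_of_top_right hA h1βtop
  have hy2 : Integrable (fun ω => β ω • B ω) P :=
    Integrable.smul_of_top_right hB hβtop
  have hyint : Integrable y P := by rw [hy]; exact hy1.add hy2
  -- mean of y
  set c : Fin m → ℝ := (1 - α) • C.mulVec xhatPred + α • Cm.mulVec xhatPrev with hc_def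
  have hβA : ∀ j, Integrable (fun ω => β ω * A ω j) P := fun j =>
    (hAj j).bdd_mul hβmeas.aestronglyMeasurable (Filter.Eventually.of_forall hβbd)
  have hβB : ∀ j, Integrable (fun ω => β ω * B ω j) P := fun j =>
    (hBj j).bdd_mul hβmeas.aestronglyMeasurable (Filter.Eventually.of_forall hβbd)
  have hIy : (∫ ω, y ω ∂P) = c := by
    funext j
    have hproj := (ContinuousLinearMap.proj (R := ℝ) (φ := fun _ : Fin m => ℝ) j).integral_comp_comm hyint
    have h1 : (∫ ω, y ω ∂P) j = ∫ ω, y ω j ∂P := by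
      simpa only [ContinuousLinearMap.proj_apply] using hproj.symm
    have h2 : ∀ ω, y ω j = A ω j - β ω * A ω j + β ω * B ω j := by
      intro ω; rw [hy]; simp [hA_def, hB_def]; ring
    have hsub : Integrable (fun ω => A ω j - β ω * A ω j) P := (hAj j).sub (hβA j)
    have h3 : ∫ ω, y ω j ∂P
        = (∫ ω, A ω j ∂P) - (∫ ω, β ω * A ω j ∂P) + ∫ ω, β ω * B ω j ∂P := by
      simp_rw [h2]
      rw [integral_add hsub (hβB j), integral_sub (hAj j) (hβA j)]
    rw [h1, h3, key _ (hAj j).aestronglyMeasurable (hindA j),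
      key _ (hBj j).aestronglyMeasurable (hindB j), hIAj j, hIBj j]
    simp only [hc_def, Pi.add_apply, Pi.smul_apply, smul_eq_mul]
    ring
  -- finish
  have hKint : Integrable (fun ω => K.mulVec (y ω - c)) P := by
    simpa [Function.comp] using
      (LinearMap.toContinuousLinearMap (Matrix.mulVecLin K)).integrable_comp
        (hyint.sub (integrable_const c))
  have hIK : (∫ ω, K.mulVec (y ω - c) ∂P) = 0 := by
    have := (LinearMap.toContinuousLinearMap (Matrix.mulVecLin K)).integral_comp_comm
      (hyint.sub (integrable_const c))
    have h4 : (∫ ω, (y ω - c) ∂P) = 0 := by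
      rw [integral_sub hyint (integrable_const c), hIy, integral_const]; simp
    calc (∫ ω, K.mulVec (y ω - c) ∂P)
        = (LinearMap.toContinuousLinearMap (Matrix.mulVecLin K)) (∫ ω, (y ω - c) ∂P) := this
      _ = 0 := by rw [h4]; simp
  have hpost : ∀ ω, x ω - xhatPost ω = (fun ω => x ω - xhatPred) ω - K.mulVec (y ω - c) := by
    intro ω
    rw [hxhatPost]
    simp only [hc_def, sub_sub]
  have hint1 : Integrable (fun ω => x ω - xhatPred) P := hx.sub (integrable_const _)
  rw [integral_congr_ae (Filter.Eventually.of_forall hpost),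
    integral_sub hint1 hKint, hIK, sub_zero, integral_sub hx (integrable_const xhatPred),
    hxmean, integral_const]
  simp
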